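/- arXiv:1305.3821 — 4 statements merged into one kernel-verified Lean document; each statement's English description precedes it below -/
import Mathlib

section
/- Every normalisable dagger Frobenius algebra in a dagger compact category is symmetric: ε∘μ∘σ = ε∘μ, where ε = η† is the counit and σ is the symmetry. -/
open CategoryTheory MonoidalCategory

universe v u

/-- A dagger compact category: a symmetric monoidal category equipped with an
identity-on-objects contravariant involution `dag` compatible with the monoidal
structure, and with chosen duals with cups `coev` and caps `ev` satisfying the snake
equations, compatibly with the dagger. -/
class DaggerCompactCategory (C : Type u) [Category.{v} C] [MonoidalCategory C]
    [SymmetricCategory C] : Type (max u v) where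
  dag : ∀ {X Y : C}, (X ⟶ Y) → (Y ⟶ X)
  dag_dag : ∀ {X Y : C} (f : X ⟶ Y), dag (dag f) = f
  dag_comp : ∀ {X Y Z : C} (f : X ⟶ Y) (g : Y ⟶ Z), dag (f ≫ g) = dag g ≫ dag f
  dag_id : ∀ X : C, dag (𝟙 X) = 𝟙 X
  dag_tensorHom : ∀ {X Y Z W : C} (f : X ⟶ Y) (g : Z ⟶ W), dag (f ⊗ₘ g) = dag f ⊗ₘ dag g
  dag_associator : ∀ X Y Z : C, dag (α_ X Y Z).hom = (α_ X Y Z).inv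
  dag_leftUnitor : ∀ X : C, dag (λ_ X).hom = (λ_ X).inv
  dag_rightUnitor : ∀ X : C, dag (ρ_ X).hom = (ρ_ X).inv
  dag_braiding : ∀ X Y : C, dag (β_ X Y).hom = (β_ X Y).inv
  dual : C → C
  coev : ∀ X : C, 𝟙_ C ⟶ dual X ⊗ X
  ev : ∀ X : C, X ⊗ dual X ⟶ 𝟙_ C
  snake₁ : ∀ X : C,
    (ρ_ X).inv ≫ (𝟙 X ⊗ₘ coev X) ≫ (α_ X (dual X) X).inv ≫ (ev X ⊗ₘ 𝟙 X) ≫ (λ_ X).hom = 𝟙 X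
  snake₂ : ∀ X : C,
    (λ_ (dual X)).inv ≫ (coev X ⊗ₘ 𝟙 (dual X)) ≫ (α_ (dual X) X (dual X)).hom ≫
      (𝟙 (dual X) ⊗ₘ ev X) ≫ (ρ_ (dual X)).hom = 𝟙 (dual X)
  dag_coev : ∀ X : C, dag (coev X) = (β_ (dual X) X).hom ≫ ev X

namespace DaggerCompactCategory

variable {C : Type u} [Category.{v} C] [MonoidalCategory C] [SymmetricCategory C]
  [DaggerCompactCategory C]

/-- The trace of the identity (the "dimension" scalar) of an object. -/
def traceScalar (X : C) : 𝟙_ C ⟶ 𝟙_ C := coev X ≫ (β_ (dual X) X).hom ≫ ev X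

/-- The "loop" obtained from `μ : A ⊗ A ⟶ A` by tracing the output against the
second input: the partial trace `Tr_A(μ) : A ⟶ I`. -/
def rightLoop {A : C} (μ : A ⊗ A ⟶ A) : A ⟶ 𝟙_ C :=
  (ρ_ A).inv ≫ (𝟙 A ⊗ₘ coev A) ≫ (𝟙 A ⊗ₘ (β_ (dual A) A).hom) ≫ (α_ A A (dual A)).inv ≫
    (μ ⊗ₘ 𝟙 (dual A)) ≫ ev A

/-- The "loop" obtained from `μ : A ⊗ A ⟶ A` by tracing the output against the
first input. -/
def leftLoop {A : C} (μ : A ⊗ A ⟶ A) : A ⟶ 𝟙_ C :=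
  (λ_ A).inv ≫ (coev A ⊗ₘ 𝟙 A) ≫ (α_ (dual A) A A).hom ≫ (𝟙 (dual A) ⊗ₘ μ) ≫
    (β_ (dual A) A).hom ≫ ev A

/-- The data of an algebra: a multiplication and a unit on an object `A`. -/
structure FrobeniusData (A : C) where
  mul : A ⊗ A ⟶ A
  unit : 𝟙_ C ⟶ A

/-- `(A, μ, η)` is a dagger Frobenius algebra: associativity, unitality and the
Frobenius law `Δ ∘ μ = (μ ⊗ id) ∘ (id ⊗ Δ)` with `Δ = μ†`. -/
structure IsFrobenius {A : C} (F : FrobeniusData A) : Prop where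
  assoc : (F.mul ⊗ₘ 𝟙 A) ≫ F.mul = (α_ A A A).hom ≫ (𝟙 A ⊗ₘ F.mul) ≫ F.mul
  unit_left : (F.unit ⊗ₘ 𝟙 A) ≫ F.mul = (λ_ A).hom
  unit_right : (𝟙 A ⊗ₘ F.unit) ≫ F.mul = (ρ_ A).hom
  frobenius : F.mul ≫ dag F.mul = (𝟙 A ⊗ₘ dag F.mul) ≫ (α_ A A A).inv ≫ (F.mul ⊗ₘ 𝟙 A)

/-- A map `z : A ⟶ A` is central for the multiplication `μ`. -/
def Central {A : C} (μ : A ⊗ A ⟶ A) (z : A ⟶ A) : Prop :=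
  (z ⊗ₘ 𝟙 A) ≫ μ = μ ≫ z ∧ (𝟙 A ⊗ₘ z) ≫ μ = μ ≫ z

/-- A positive map: `z = h ≫ h†` for some `h`. -/
def IsPositive {A : C} (z : A ⟶ A) : Prop := ∃ (B : C) (h : A ⟶ B), z = h ≫ dag h

/-- Positive definite: a positive isomorphism. -/
def IsPositiveDefinite {A : C} (z : A ⟶ A) : Prop := IsPositive z ∧ IsIso z

/-- `(A, μ, η)` is a normalisable dagger Frobenius algebra with normaliser `z`:
`z` is central and positive definite and `Tr_A(μ) ∘ z² = η†`. -/
structure IsNormalisable {A : C} (F : FrobeniusData A) (z : A ⟶ A) : Prop where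
  isFrobenius : IsFrobenius F
  central : Central F.mul z
  posdef : IsPositiveDefinite z
  normalised : z ≫ z ≫ rightLoop F.mul = dag F.unit

/-- A dagger Frobenius algebra is symmetric when `η† ∘ μ ∘ σ = η† ∘ μ`. -/
def IsSymmetric {A : C} (F : FrobeniusData A) : Prop :=
  (β_ A A).hom ≫ F.mul ≫ dag F.unit = F.mul ≫ dag F.unit

/-- The middle-four interchange `(P⊗Q)⊗(R⊗S) ⟶ (P⊗R)⊗(Q⊗S)`. -/
def shuffle (P Q R S : C) : (P ⊗ Q) ⊗ (R ⊗ S) ⟶ (P ⊗ R) ⊗ (Q ⊗ S) :=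
  (α_ P Q (R ⊗ S)).hom ≫ (𝟙 P ⊗ₘ (α_ Q R S).inv) ≫ (𝟙 P ⊗ₘ ((β_ Q R).hom ⊗ₘ 𝟙 S)) ≫
    (𝟙 P ⊗ₘ (α_ R Q S).hom) ≫ (α_ P R (Q ⊗ S)).inv

/-- The componentwise (tensor product) algebra structure on `A ⊗ B`. -/
def tensorFrobenius {A B : C} (FA : FrobeniusData A) (FB : FrobeniusData B) :
    FrobeniusData (A ⊗ B) where
  mul := shuffle A B A B ≫ (FA.mul ⊗ₘ FB.mul)
  unit := (λ_ (𝟙_ C)).inv ≫ (FA.unit ⊗ₘ FB.unit)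

/-- The transpose `f* : Y* ⟶ X*` of `f : X ⟶ Y`, via the compact structure. -/
def transpose {X Y : C} (f : X ⟶ Y) : dual Y ⟶ dual X :=
  (ρ_ (dual Y)).inv ≫ (𝟙 (dual Y) ⊗ₘ coev X) ≫ (𝟙 (dual Y) ⊗ₘ (𝟙 (dual X) ⊗ₘ f)) ≫
    (𝟙 (dual Y) ⊗ₘ (β_ (dual X) Y).hom) ≫ (α_ (dual Y) Y (dual X)).inv ≫
    ((β_ (dual Y) Y).hom ⊗ₘ 𝟙 (dual X)) ≫ (ev Y ⊗ₘ 𝟙 (dual X)) ≫ (λ_ (dual X)).hom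

/-- The conjugate `f_* = (f†)* : X* ⟶ Y*` of `f : X ⟶ Y`. -/
def conj {X Y : C} (f : X ⟶ Y) : dual X ⟶ dual Y := dag (transpose f)

/-- The Frobenius cup `Δ ∘ η : I ⟶ A ⊗ A`. -/
def frobCup {A : C} (F : FrobeniusData A) : 𝟙_ C ⟶ A ⊗ A := F.unit ≫ dag F.mul

/-- The Frobenius cap `ε ∘ μ : A ⊗ A ⟶ I`. -/
def frobCap {A : C} (F : FrobeniusData A) : A ⊗ A ⟶ 𝟙_ C := F.mul ≫ dag F.unit

/-- The dualiser `A ⟶ A*` induced by a Frobenius algebra. -/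
def dualiser {A : C} (F : FrobeniusData A) : A ⟶ dual A :=
  (λ_ A).inv ≫ (coev A ⊗ₘ 𝟙 A) ≫ (α_ (dual A) A A).hom ≫ (𝟙 (dual A) ⊗ₘ frobCap F) ≫
    (ρ_ (dual A)).hom

/-- The inverse dualiser `A* ⟶ A` induced by a Frobenius algebra. -/
def dualiserInv {A : C} (F : FrobeniusData A) : dual A ⟶ A :=
  (λ_ (dual A)).inv ≫ (frobCup F ⊗ₘ 𝟙 (dual A)) ≫ (α_ A A (dual A)).hom ≫
    (𝟙 A ⊗ₘ ev A) ≫ (ρ_ A).hom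

/-- The coaction `A* ⊗ A ⟶ A` of a Frobenius algebra: multiplication precomposed with
the dualiser identification on the first (conjugate) leg. -/
def coact {A : C} (F : FrobeniusData A) : dual A ⊗ A ⟶ A :=
  (dualiserInv F ⊗ₘ 𝟙 A) ≫ F.mul

/-- The action `A ⟶ A* ⊗ A` of a Frobenius algebra (the dagger of the coaction). -/
def act {A : C} (F : FrobeniusData A) : A ⟶ dual A ⊗ A := dag (coact F)

/-- The canonical pairing `X* ⊗ X ⟶ I`. -/
def pairDual (X : C) : dual X ⊗ X ⟶ 𝟙_ C := (β_ (dual X) X).hom ≫ ev X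

/-- The pairing `(X* ⊗ B*) ⊗ (X ⊗ B) ⟶ I`. -/
def pair₂ (X B : C) : (dual X ⊗ dual B) ⊗ (X ⊗ B) ⟶ 𝟙_ C :=
  shuffle (dual X) (dual B) X B ≫ (pairDual X ⊗ₘ pairDual B) ≫ (λ_ (𝟙_ C)).hom

/-- The two-legged transpose `X* ⊗ B* ⟶ A*` of a map `g : A ⟶ X ⊗ B`. -/
def transpose₂ {A X B : C} (g : A ⟶ X ⊗ B) : dual X ⊗ dual B ⟶ dual A :=
  (ρ_ (dual X ⊗ dual B)).inv ≫ (𝟙 (dual X ⊗ dual B) ⊗ₘ coev A) ≫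
    (α_ (dual X ⊗ dual B) (dual A) A).inv ≫ ((β_ (dual X ⊗ dual B) (dual A)).hom ⊗ₘ 𝟙 A) ≫
    (α_ (dual A) (dual X ⊗ dual B) A).hom ≫ (𝟙 (dual A) ⊗ₘ (𝟙 (dual X ⊗ dual B) ⊗ₘ g)) ≫
    (𝟙 (dual A) ⊗ₘ pair₂ X B) ≫ (ρ_ (dual A)).hom

/-- The two-legged conjugate `g_* : A* ⟶ X* ⊗ B*` of `g : A ⟶ X ⊗ B`. -/
def conj₂ {A X B : C} (g : A ⟶ X ⊗ B) : dual A ⟶ dual X ⊗ dual B := dag (transpose₂ g)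

/-- The right-hand side of the CP*-condition: `g_* ⊗ g` with the ancilla legs `X`
contracted by the ambient cap. -/
def cpRHS {A B X : C} (g : A ⟶ X ⊗ B) : dual A ⊗ A ⟶ dual B ⊗ B :=
  (conj₂ g ⊗ₘ g) ≫ shuffle (dual X) (dual B) X B ≫ (pairDual X ⊗ₘ 𝟙 (dual B ⊗ B)) ≫
    (λ_ (dual B ⊗ B)).hom

/-- The CP*-condition for `f : A ⟶ B` between Frobenius algebras: there is an ancilla `X`
and a Kraus map `g : A ⟶ X ⊗ B` with `act_B ∘ f ∘ coact_A = g_* ⊗ g` (ancilla contracted). -/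
def CPCondition {A B : C} (FA : FrobeniusData A) (FB : FrobeniusData B) (f : A ⟶ B) : Prop :=
  ∃ (X : C) (g : A ⟶ X ⊗ B), coact FA ≫ f ≫ act FB = cpRHS g

/-- A *-homomorphism between Frobenius algebras: multiplicative, unital, and compatible
with the involutions induced by the Frobenius structures (expressed via the dualisers
and the ambient conjugation). -/
structure IsStarHom {A B : C} (FA : FrobeniusData A) (FB : FrobeniusData B)
    (f : A ⟶ B) : Prop where
  mul_compat : (f ⊗ₘ f) ≫ FB.mul = FA.mul ≫ f
  unit_compat : FA.unit ≫ f = FB.unit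
  star_compat : f ≫ dualiser FB = dualiser FA ≫ conj f

/-- Scalar multiplication of a morphism by a scalar `s : I ⟶ I`. -/
def smulHom {X Y : C} (s : 𝟙_ C ⟶ 𝟙_ C) (f : X ⟶ Y) : X ⟶ Y :=
  (λ_ X).inv ≫ (s ⊗ₘ f) ≫ (λ_ Y).hom

/-- The "pair of pants" algebra structure on `H* ⊗ H`. -/
def pants (H : C) : FrobeniusData (dual H ⊗ H) where
  mul := (α_ (dual H) H (dual H ⊗ H)).hom ≫ (𝟙 (dual H) ⊗ₘ (α_ H (dual H) H).inv) ≫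
    (𝟙 (dual H) ⊗ₘ (ev H ⊗ₘ 𝟙 H)) ≫ (𝟙 (dual H) ⊗ₘ (λ_ H).hom)
  unit := coev H

end DaggerCompactCategory

open DaggerCompactCategory

section AuxProof

open DaggerCompactCategory BraidedCategory ExactPairing

variable {C : Type u} [Category.{v} C] [MonoidalCategory C] [SymmetricCategory C]
  [DaggerCompactCategory C]

instance instEP (A : C) : ExactPairing (dual A) A where
  coevaluation' := coev A
  evaluation' := ev A
  coevaluation_evaluation' := by
    rw [← cancel_epi (ρ_ A).inv, ← cancel_mono (λ_ A).hom]
    simpa using snake₁ (C := C) A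
  evaluation_coevaluation' := by
    rw [← cancel_epi (λ_ (dual A)).inv, ← cancel_mono (ρ_ (dual A)).hom]
    simpa using snake₂ (C := C) A

instance instEP' (A : C) : ExactPairing A (dual A) :=
  BraidedCategory.exactPairing_swap (dual A) A

lemma eta_eq (A : C) : η_ A (dual A) = coev A ≫ (β_ (dual A) A).hom := by
  rw [SymmetricCategory.braiding_swap_eq_inv_braiding]
  rfl

lemma eps_eq (A : C) : ε_ A (dual A) = (β_ (dual A) A).hom ≫ ev A := rfl

lemma ev_eq (A : C) : ev A = (β_ A (dual A)).hom ≫ ε_ A (dual A) := by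
  rw [eps_eq, ← Category.assoc, SymmetricCategory.symmetry, Category.id_comp]

/-- Partial right trace of `f : X ⊗ A ⟶ A` over `A`. -/
def ptr {X A : C} (f : X ⊗ A ⟶ A) : X ⟶ 𝟙_ C :=
  (ρ_ X).inv ≫ X ◁ η_ A (dual A) ≫ (α_ X A (dual A)).inv ≫ f ▷ dual A ≫ ev A

lemma rightLoop_eq_ptr {A : C} (μ : A ⊗ A ⟶ A) : rightLoop μ = ptr μ := by
  dsimp [rightLoop, ptr]
  rw [eta_eq]
  simp

/-- The partial mate of `u : X ⊗ A ⟶ A` in the last strand. -/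
def pm {X A : C} (u : X ⊗ A ⟶ A) : dual A ⊗ X ⟶ dual A :=
  𝟙 (dual A ⊗ X) ⊗≫ (dual A ⊗ X) ◁ η_ A (dual A) ⊗≫
    dual A ◁ u ▷ dual A ⊗≫ ε_ A (dual A) ▷ dual A ⊗≫ 𝟙 (dual A)

lemma cup_slide {X A : C} (u : X ⊗ A ⟶ A) :
    𝟙 X ⊗≫ X ◁ η_ A (dual A) ⊗≫ u ▷ dual A =
      𝟙 X ⊗≫ η_ A (dual A) ▷ X ⊗≫ A ◁ pm u := by
  symm
  calc 𝟙 X ⊗≫ η_ A (dual A) ▷ X ⊗≫ A ◁ pm u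
      = 𝟙 X ⊗≫ (η_ A (dual A) ▷ (X ⊗ 𝟙_ C) ≫
          (A ⊗ dual A) ◁ (X ◁ η_ A (dual A) ⊗≫ u ▷ dual A)) ⊗≫
          A ◁ (ε_ A (dual A) ▷ dual A) ⊗≫ 𝟙 (A ⊗ dual A) := by
        dsimp [pm]; monoidal
    _ = 𝟙 X ⊗≫ (𝟙_ C ◁ (X ◁ η_ A (dual A) ⊗≫ u ▷ dual A) ≫
          η_ A (dual A) ▷ (A ⊗ dual A)) ⊗≫
          A ◁ (ε_ A (dual A) ▷ dual A) ⊗≫ 𝟙 (A ⊗ dual A) := by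
        rw [← whisker_exchange]
    _ = 𝟙 X ⊗≫ (X ◁ η_ A (dual A) ⊗≫ u ▷ dual A) ⊗≫
          ((η_ A (dual A) ▷ A ≫ (α_ A (dual A) A).hom ≫ A ◁ ε_ A (dual A)) ▷ dual A) ⊗≫
          𝟙 (A ⊗ dual A) := by
        monoidal
    _ = 𝟙 X ⊗≫ X ◁ η_ A (dual A) ⊗≫ u ▷ dual A := by
        rw [ExactPairing.evaluation_coevaluation]; monoidal

lemma cap_slide {X A : C} (u : X ⊗ A ⟶ A) :
    dual A ◁ u ≫ ε_ A (dual A) =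
      𝟙 (dual A ⊗ (X ⊗ A)) ⊗≫ pm u ▷ A ≫ ε_ A (dual A) := by
  symm
  calc 𝟙 (dual A ⊗ (X ⊗ A)) ⊗≫ pm u ▷ A ≫ ε_ A (dual A)
      = 𝟙 (dual A ⊗ (X ⊗ A)) ⊗≫ ((dual A ⊗ X) ◁ η_ A (dual A)) ▷ A ⊗≫
          (dual A ◁ u) ▷ (dual A ⊗ A) ⊗≫
          (ε_ A (dual A) ▷ (dual A ⊗ A) ≫ 𝟙_ C ◁ ε_ A (dual A)) ⊗≫ 𝟙 (𝟙_ C) := by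
        dsimp [pm]; monoidal
    _ = 𝟙 (dual A ⊗ (X ⊗ A)) ⊗≫ ((dual A ⊗ X) ◁ η_ A (dual A)) ▷ A ⊗≫
          ((dual A ◁ u) ▷ (dual A ⊗ A) ≫ (dual A ⊗ A) ◁ ε_ A (dual A)) ⊗≫
          ε_ A (dual A) ▷ 𝟙_ C ⊗≫ 𝟙 (𝟙_ C) := by
        rw [← whisker_exchange]; monoidal
    _ = 𝟙 (dual A ⊗ (X ⊗ A)) ⊗≫ ((dual A ⊗ X) ◁ η_ A (dual A)) ▷ A ⊗≫
          ((dual A ⊗ (X ⊗ A) : C) ◁ ε_ A (dual A) ≫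
          (dual A ◁ u) ▷ 𝟙_ C) ⊗≫ ε_ A (dual A) ▷ 𝟙_ C ⊗≫ 𝟙 (𝟙_ C) := by
        rw [← whisker_exchange]
    _ = 𝟙 (dual A ⊗ (X ⊗ A)) ⊗≫ ((dual A ⊗ X : C) ◁
          (η_ A (dual A) ▷ A ≫ (α_ A (dual A) A).hom ≫ A ◁ ε_ A (dual A))) ⊗≫
          (dual A ◁ u ≫ ε_ A (dual A)) ⊗≫ 𝟙 (𝟙_ C) := by
        monoidal
    _ = dual A ◁ u ≫ ε_ A (dual A) := by
        rw [ExactPairing.evaluation_coevaluation]; monoidal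

lemma b3 (X Y A : C) :
    (α_ X Y A).hom ≫ X ◁ (β_ Y A).hom ≫ (α_ X A Y).inv ≫ (β_ (X ⊗ A) Y).hom =
      (β_ X Y).hom ▷ A ≫ (α_ Y X A).hom := by
  rw [braiding_tensor_left_hom]
  simp only [Category.assoc, Iso.inv_hom_id_assoc]
  rw [← MonoidalCategory.whiskerLeft_comp_assoc, SymmetricCategory.symmetry,
    MonoidalCategory.whiskerLeft_id, Category.id_comp, Iso.hom_inv_id_assoc]

lemma comp_ptr {Z X A : C} (g : Z ⟶ X) (f : X ⊗ A ⟶ A) :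
    g ≫ ptr f = ptr (g ▷ A ≫ f) := by
  calc g ≫ ptr f
      = 𝟙 Z ⊗≫ (g ▷ 𝟙_ C ≫ X ◁ η_ A (dual A)) ⊗≫ f ▷ dual A ≫ ev A := by
        dsimp [ptr]; monoidal
    _ = 𝟙 Z ⊗≫ (Z ◁ η_ A (dual A) ≫ g ▷ (A ⊗ dual A)) ⊗≫ f ▷ dual A ≫ ev A := by
        rw [← whisker_exchange]
    _ = ptr (g ▷ A ≫ f) := by
        dsimp [ptr]; monoidal

set_option maxHeartbeats 1600000 in
lemma ptr_cyclic {X Y A : C} (u : X ⊗ A ⟶ A) (v : Y ⊗ A ⟶ A) :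
    ptr ((α_ X Y A).hom ≫ X ◁ v ≫ u) = (β_ X Y).hom ≫ ptr ((α_ Y X A).hom ≫ Y ◁ u ≫ v) := by
  have hR : (β_ X Y).hom ≫ ptr ((α_ Y X A).hom ≫ Y ◁ u ≫ v)
      = 𝟙 (X ⊗ Y) ⊗≫ (X ⊗ Y) ◁ η_ A (dual A) ⊗≫
          (((β_ X Y).hom ▷ A ≫ (α_ Y X A).hom) ▷ dual A ≫
            (β_ (Y ⊗ (X ⊗ A)) (dual A)).hom) ⊗≫
          dual A ◁ (Y ◁ u) ⊗≫ (dual A ◁ v ≫ ε_ A (dual A)) := by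
    calc (β_ X Y).hom ≫ ptr ((α_ Y X A).hom ≫ Y ◁ u ≫ v)
        = 𝟙 (X ⊗ Y) ⊗≫ ((β_ X Y).hom ▷ 𝟙_ C ≫ (Y ⊗ X : C) ◁ η_ A (dual A)) ⊗≫
            (Y ◁ u) ▷ dual A ⊗≫ (v ▷ dual A ≫ ev A) := by
          dsimp [ptr]; monoidal
      _ = 𝟙 (X ⊗ Y) ⊗≫ ((X ⊗ Y) ◁ η_ A (dual A) ≫ (β_ X Y).hom ▷ (A ⊗ dual A)) ⊗≫
            (Y ◁ u) ▷ dual A ⊗≫ (v ▷ dual A ≫ ev A) := by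
          rw [← whisker_exchange]
      _ = 𝟙 (X ⊗ Y) ⊗≫ (X ⊗ Y) ◁ η_ A (dual A) ⊗≫ (β_ X Y).hom ▷ (A ⊗ dual A) ⊗≫
            (Y ◁ u) ▷ dual A ⊗≫
            (v ▷ dual A ≫ (β_ A (dual A)).hom) ≫ ε_ A (dual A) := by
          rw [ev_eq]; monoidal
      _ = 𝟙 (X ⊗ Y) ⊗≫ (X ⊗ Y) ◁ η_ A (dual A) ⊗≫ (β_ X Y).hom ▷ (A ⊗ dual A) ⊗≫
            ((Y ◁ u) ▷ dual A ≫ (β_ (Y ⊗ A) (dual A)).hom) ⊗≫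
            (dual A ◁ v ≫ ε_ A (dual A)) := by
          rw [braiding_naturality_left v (dual A)]; monoidal
      _ = 𝟙 (X ⊗ Y) ⊗≫ (X ⊗ Y) ◁ η_ A (dual A) ⊗≫ (β_ X Y).hom ▷ (A ⊗ dual A) ⊗≫
            ((β_ (Y ⊗ (X ⊗ A)) (dual A)).hom ≫ dual A ◁ (Y ◁ u)) ⊗≫
            (dual A ◁ v ≫ ε_ A (dual A)) := by
          rw [braiding_naturality_left (Y ◁ u) (dual A)]
      _ = _ := by monoidal
  calc ptr ((α_ X Y A).hom ≫ X ◁ v ≫ u)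
      = 𝟙 (X ⊗ Y) ⊗≫ X ◁ (𝟙 Y ⊗≫ Y ◁ η_ A (dual A) ⊗≫ v ▷ dual A) ⊗≫
          u ▷ dual A ≫ ev A := by
        dsimp [ptr]; monoidal
    _ = 𝟙 (X ⊗ Y) ⊗≫ X ◁ (𝟙 Y ⊗≫ η_ A (dual A) ▷ Y ⊗≫ A ◁ pm v) ⊗≫
          u ▷ dual A ≫ ev A := by
        rw [cup_slide]
    _ = 𝟙 (X ⊗ Y) ⊗≫ (X ◁ η_ A (dual A)) ▷ Y ⊗≫
          ((X ⊗ A : C) ◁ pm v ≫ u ▷ dual A) ≫ ev A := by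
        monoidal
    _ = 𝟙 (X ⊗ Y) ⊗≫ (X ◁ η_ A (dual A)) ▷ Y ⊗≫
          (u ▷ (dual A ⊗ Y) ≫ A ◁ pm v) ≫ ev A := by
        rw [whisker_exchange]
    _ = 𝟙 (X ⊗ Y) ⊗≫ (X ◁ η_ A (dual A)) ▷ Y ⊗≫ u ▷ (dual A ⊗ Y) ⊗≫
          (A ◁ pm v ≫ (β_ A (dual A)).hom) ≫ ε_ A (dual A) := by
        rw [ev_eq]; monoidal
    _ = 𝟙 (X ⊗ Y) ⊗≫ (X ◁ η_ A (dual A)) ▷ Y ⊗≫ u ▷ (dual A ⊗ Y) ⊗≫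
          ((β_ A (dual A ⊗ Y)).hom ≫ pm v ▷ A) ≫ ε_ A (dual A) := by
        rw [braiding_naturality_right A (pm v)]
    _ = 𝟙 (X ⊗ Y) ⊗≫ (X ◁ η_ A (dual A)) ▷ Y ⊗≫
          (u ▷ (dual A ⊗ Y) ≫ (β_ A (dual A ⊗ Y)).hom) ⊗≫
          (𝟙 (dual A ⊗ (Y ⊗ A)) ⊗≫ pm v ▷ A ≫ ε_ A (dual A)) := by
        monoidal
    _ = 𝟙 (X ⊗ Y) ⊗≫ (X ◁ η_ A (dual A)) ▷ Y ⊗≫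
          (u ▷ (dual A ⊗ Y) ≫ (β_ A (dual A ⊗ Y)).hom) ⊗≫
          (dual A ◁ v ≫ ε_ A (dual A)) := by
        rw [← cap_slide]
    _ = 𝟙 (X ⊗ Y) ⊗≫ (X ◁ η_ A (dual A)) ▷ Y ⊗≫
          ((β_ (X ⊗ A) (dual A ⊗ Y)).hom ≫ (dual A ⊗ Y : C) ◁ u) ⊗≫
          (dual A ◁ v ≫ ε_ A (dual A)) := by
        rw [braiding_naturality_left u (dual A ⊗ Y)]
    _ = 𝟙 (X ⊗ Y) ⊗≫ X ◁ (Y ◁ η_ A (dual A) ≫ (β_ Y (A ⊗ dual A)).hom) ⊗≫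
          (β_ (X ⊗ A) (dual A ⊗ Y)).hom ⊗≫ dual A ◁ (Y ◁ u) ⊗≫
          (dual A ◁ v ≫ ε_ A (dual A)) := by
        rw [braiding_naturality_right Y (η_ A (dual A)), braiding_tensorUnit_right]; monoidal
    _ = 𝟙 (X ⊗ Y) ⊗≫ (X ⊗ Y) ◁ η_ A (dual A) ⊗≫ X ◁ ((β_ Y A).hom ▷ dual A) ⊗≫
          X ◁ (A ◁ (β_ Y (dual A)).hom) ⊗≫ (β_ (X ⊗ A) (dual A)).hom ▷ Y ⊗≫
          dual A ◁ (β_ (X ⊗ A) Y).hom ⊗≫ dual A ◁ (Y ◁ u) ⊗≫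
          (dual A ◁ v ≫ ε_ A (dual A)) := by
        rw [braiding_tensor_right_hom Y A (dual A), braiding_tensor_right_hom (X ⊗ A) (dual A) Y]
        monoidal
    _ = 𝟙 (X ⊗ Y) ⊗≫ (X ⊗ Y) ◁ η_ A (dual A) ⊗≫ X ◁ ((β_ Y A).hom ▷ dual A) ⊗≫
          (β_ ((X ⊗ A) ⊗ Y) (dual A)).hom ⊗≫
          dual A ◁ (β_ (X ⊗ A) Y).hom ⊗≫ dual A ◁ (Y ◁ u) ⊗≫
          (dual A ◁ v ≫ ε_ A (dual A)) := by
        rw [braiding_tensor_left_hom (X ⊗ A) Y (dual A)]; monoidal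
    _ = 𝟙 (X ⊗ Y) ⊗≫ (X ⊗ Y) ◁ η_ A (dual A) ⊗≫
          (((α_ X Y A).hom ≫ X ◁ (β_ Y A).hom ≫ (α_ X A Y).inv) ▷ dual A ≫
            (β_ ((X ⊗ A) ⊗ Y) (dual A)).hom) ⊗≫
          dual A ◁ (β_ (X ⊗ A) Y).hom ⊗≫ dual A ◁ (Y ◁ u) ⊗≫
          (dual A ◁ v ≫ ε_ A (dual A)) := by
        monoidal
    _ = 𝟙 (X ⊗ Y) ⊗≫ (X ⊗ Y) ◁ η_ A (dual A) ⊗≫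
          ((β_ ((X ⊗ Y) ⊗ A) (dual A)).hom ≫
            dual A ◁ ((α_ X Y A).hom ≫ X ◁ (β_ Y A).hom ≫ (α_ X A Y).inv)) ⊗≫
          dual A ◁ (β_ (X ⊗ A) Y).hom ⊗≫ dual A ◁ (Y ◁ u) ⊗≫
          (dual A ◁ v ≫ ε_ A (dual A)) := by
        rw [braiding_naturality_left
          ((α_ X Y A).hom ≫ X ◁ (β_ Y A).hom ≫ (α_ X A Y).inv) (dual A)]
    _ = 𝟙 (X ⊗ Y) ⊗≫ (X ⊗ Y) ◁ η_ A (dual A) ⊗≫ (β_ ((X ⊗ Y) ⊗ A) (dual A)).hom ⊗≫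
          dual A ◁ ((α_ X Y A).hom ≫ X ◁ (β_ Y A).hom ≫ (α_ X A Y).inv ≫
            (β_ (X ⊗ A) Y).hom) ⊗≫
          dual A ◁ (Y ◁ u) ⊗≫ (dual A ◁ v ≫ ε_ A (dual A)) := by
        monoidal
    _ = 𝟙 (X ⊗ Y) ⊗≫ (X ⊗ Y) ◁ η_ A (dual A) ⊗≫ (β_ ((X ⊗ Y) ⊗ A) (dual A)).hom ⊗≫
          dual A ◁ ((β_ X Y).hom ▷ A ≫ (α_ Y X A).hom) ⊗≫
          dual A ◁ (Y ◁ u) ⊗≫ (dual A ◁ v ≫ ε_ A (dual A)) := by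
        rw [b3]
    _ = 𝟙 (X ⊗ Y) ⊗≫ (X ⊗ Y) ◁ η_ A (dual A) ⊗≫
          (((β_ X Y).hom ▷ A ≫ (α_ Y X A).hom) ▷ dual A ≫
            (β_ (Y ⊗ (X ⊗ A)) (dual A)).hom) ⊗≫
          dual A ◁ (Y ◁ u) ⊗≫ (dual A ◁ v ≫ ε_ A (dual A)) := by
        rw [braiding_naturality_left ((β_ X Y).hom ▷ A ≫ (α_ Y X A).hom) (dual A)]; monoidal
    _ = (β_ X Y).hom ≫ ptr ((α_ Y X A).hom ≫ Y ◁ u ≫ v) := hR.symm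

lemma main_key {A : C} (F : FrobeniusData A) (z : A ⟶ A) (h : IsNormalisable F z) :
    (β_ A A).hom ≫ F.mul ≫ dag F.unit = F.mul ≫ dag F.unit := by
  obtain ⟨hF, ⟨hzl, hzr⟩, _, hnorm⟩ := h
  rw [← hnorm]
  have hzz : (z ⊗ₘ z) ≫ F.mul = F.mul ≫ z ≫ z := by
    calc (z ⊗ₘ z) ≫ F.mul = (𝟙 A ⊗ₘ z) ≫ ((z ⊗ₘ 𝟙 A) ≫ F.mul) := by
          rw [← Category.assoc, tensorHom_comp_tensorHom]; simp
      _ = (𝟙 A ⊗ₘ z) ≫ F.mul ≫ z := by rw [hzl]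
      _ = (F.mul ≫ z) ≫ z := by rw [← Category.assoc, hzr]
      _ = F.mul ≫ z ≫ z := by simp
  have assoc' : F.mul ▷ A ≫ F.mul = (α_ A A A).hom ≫ A ◁ F.mul ≫ F.mul := by
    simpa using hF.assoc
  have key : (β_ A A).hom ≫ F.mul ≫ rightLoop F.mul = F.mul ≫ rightLoop F.mul := by
    rw [rightLoop_eq_ptr]
    calc (β_ A A).hom ≫ F.mul ≫ ptr F.mul
        = (β_ A A).hom ≫ ptr (F.mul ▷ A ≫ F.mul) := by rw [comp_ptr]
      _ = (β_ A A).hom ≫ ptr ((α_ A A A).hom ≫ A ◁ F.mul ≫ F.mul) := by rw [assoc']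
      _ = ptr ((α_ A A A).hom ≫ A ◁ F.mul ≫ F.mul) := (ptr_cyclic F.mul F.mul).symm
      _ = ptr (F.mul ▷ A ≫ F.mul) := by rw [assoc']
      _ = F.mul ≫ ptr F.mul := (comp_ptr _ _).symm
  calc (β_ A A).hom ≫ F.mul ≫ z ≫ z ≫ rightLoop F.mul
      = (β_ A A).hom ≫ ((F.mul ≫ z ≫ z) ≫ rightLoop F.mul) := by simp [Category.assoc]
    _ = (β_ A A).hom ≫ ((z ⊗ₘ z) ≫ F.mul) ≫ rightLoop F.mul := by rw [hzz]
    _ = (z ⊗ₘ z) ≫ (β_ A A).hom ≫ F.mul ≫ rightLoop F.mul := by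
        rw [← Category.assoc, ← Category.assoc, ← braiding_naturality z z]
        simp [Category.assoc]
    _ = (z ⊗ₘ z) ≫ F.mul ≫ rightLoop F.mul := by rw [key]
    _ = (F.mul ≫ z ≫ z) ≫ rightLoop F.mul := by rw [← Category.assoc, hzz]
    _ = F.mul ≫ z ≫ z ≫ rightLoop F.mul := by simp [Category.assoc]

end AuxProof

/-- every normalisable dagger Frobenius algebra in a dagger compact
category is symmetric. -/
theorem normalisable_implies_symmetric {C : Type u} [Category.{v} C] [MonoidalCategory C]
    [SymmetricCategory C] [DaggerCompactCategory C] {A : C} (F : FrobeniusData A)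
    (z : A ⟶ A) (h : IsNormalisable F z) : IsSymmetric F := by
  exact main_key F z h
end

section
/- Normalisable dagger Frobenius algebras in the category Rel of sets and relations are exactly special: normalisability implies μ∘μ† = id. -/
/-!  Frobenius algebras in the dagger compact category `Rel` of sets and relations,
written out pointwise.  A relation `A ⊸ B` is a function `A → B → Prop`; composition,
converse (the dagger) and cartesian product are the usual ones. -/

/-- `(A, mul, unit)` is a dagger Frobenius algebra in `Rel`: associativity, unitality
and the Frobenius law `Δ∘μ = (μ⊗id)∘(id⊗Δ)` with `Δ = μ†` the relational converse,
written pointwise. -/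
structure IsRelFrobenius {A : Type*} (mul : A × A → A → Prop)
    (unit : Unit → A → Prop) : Prop where
  assoc : ∀ a b c d : A,
    (∃ x, mul (a, b) x ∧ mul (x, c) d) ↔ (∃ y, mul (b, c) y ∧ mul (a, y) d)
  unit_left : ∀ a b : A, (∃ e, unit () e ∧ mul (e, a) b) ↔ a = b
  unit_right : ∀ a b : A, (∃ e, unit () e ∧ mul (a, e) b) ↔ a = b
  frobenius : ∀ a b c d : A,
    (∃ m, mul (a, b) m ∧ mul (c, d) m) ↔ (∃ x, mul (x, d) b ∧ mul (a, x) c)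

/-- Centrality of `z` for `mul`, in `Rel`: `μ∘(z⊗id) = z∘μ = μ∘(id⊗z)`. -/
def RelCentral {A : Type*} (mul : A × A → A → Prop) (z : A → A → Prop) : Prop :=
  (∀ a b c, (∃ a', z a a' ∧ mul (a', b) c) ↔ (∃ m, mul (a, b) m ∧ z m c)) ∧
  (∀ a b c, (∃ b', z b b' ∧ mul (a, b') c) ↔ (∃ m, mul (a, b) m ∧ z m c))

/-- Positivity in `Rel`: `z = h† ∘ h` for some relation `h`. -/
def RelPositive {A : Type*} (z : A → A → Prop) : Prop :=
  ∃ (B : Type) (h : A → B → Prop), ∀ a a', z a a' ↔ ∃ b, h a b ∧ h a' b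

/-- Invertibility in `Rel`. -/
def RelInvertible {A : Type*} (z : A → A → Prop) : Prop :=
  ∃ w : A → A → Prop, (∀ a a', (∃ x, z a x ∧ w x a') ↔ a = a') ∧
    (∀ a a', (∃ x, w a x ∧ z x a') ↔ a = a')

/-- A normalisable dagger Frobenius algebra in `Rel`: a dagger Frobenius algebra with a
central positive-definite `z` such that `Tr_A(μ) ∘ z² = η†`, where the loop
`Tr_A(μ)` relates `a` to `()` iff `∃ b, mul (a,b) b`. -/
structure IsRelNormalisable {A : Type*} (mul : A × A → A → Prop)
    (unit : Unit → A → Prop) (z : A → A → Prop) : Prop where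
  isFrobenius : IsRelFrobenius mul unit
  central : RelCentral mul z
  positive : RelPositive z
  iso : RelInvertible z
  normalised : ∀ a : A,
    (∃ a'', (∃ a', z a a' ∧ z a' a'') ∧ ∃ b, mul (a'', b) b) ↔ unit () a

/-- normalisable dagger Frobenius algebras in `Rel` are special:
`μ ∘ μ† = id`. -/
theorem rel_normalisable_special {A : Type*} (mul : A × A → A → Prop)
    (unit : Unit → A → Prop) (z : A → A → Prop)
    (h : IsRelNormalisable mul unit z) :
    ∀ a a' : A, (∃ p : A × A, mul p a ∧ mul p a') ↔ a = a' := by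
  -- `z` is symmetric, since it is positive
  have zsymm : ∀ a a', z a a' → z a' a := by
    obtain ⟨B, g, hg⟩ := h.positive
    intro a a' haa'
    obtain ⟨b, h1, h2⟩ := (hg a a').mp haa'
    exact (hg a' a).mpr ⟨b, h2, h1⟩
  -- `z` is total, since it is invertible
  have ztotal : ∀ a : A, ∃ x, z a x := by
    obtain ⟨w, hw1, _⟩ := h.iso
    intro a
    obtain ⟨x, hx, _⟩ := (hw1 a a).mpr rfl
    exact ⟨x, hx⟩
  -- Key lemma: the left trace lands in the unit, `mul (t, b) b → unit () t`.
  have lemA : ∀ t b : A, mul (t, b) b → unit () t := by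
    intro t b htb
    obtain ⟨x, hx⟩ := ztotal t
    exact (h.normalised t).mp ⟨t, ⟨x, hx, zsymm t x hx⟩, b, htb⟩
  intro a a'
  constructor
  · rintro ⟨⟨x, y⟩, hxya, hxya'⟩
    -- Step 1: get `t` with `mul (t,y) y` and `mul (x,t) x`; then `t` is a unit.
    obtain ⟨t, hty, hxt⟩ :=
      (h.isFrobenius.frobenius x y x y).mp ⟨a, hxya, hxya⟩
    have tE : unit () t := lemA t y hty
    -- Step 2: a right unit for `y`.
    obtain ⟨e, eE, hye⟩ := (h.isFrobenius.unit_right y y).mpr rfl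
    -- Step 3: get `u` with `mul (u,y) e` and `mul (y,u) t`.
    obtain ⟨u, huy, hyu⟩ :=
      (h.isFrobenius.frobenius y e t y).mp ⟨y, hye, hty⟩
    -- Step 4: `mul (a, u) x` and `mul (a', u) x`.
    have key : ∀ c : A, mul (x, y) c → mul (c, u) x := by
      intro c hc
      obtain ⟨m, hxtm, hcum⟩ :=
        (h.isFrobenius.frobenius x t c u).mpr ⟨y, hyu, hc⟩
      have : x = m := (h.isFrobenius.unit_right x m).mp ⟨t, tE, hxtm⟩
      exact this ▸ hcum
    -- Step 5: conclude `a = a'`.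
    obtain ⟨v, hvu, hav⟩ :=
      (h.isFrobenius.frobenius a u a' u).mp ⟨x, key a hxya, key a' hxya'⟩
    have vE : unit () v := lemA v u hvu
    exact (h.isFrobenius.unit_right a a').mp ⟨v, vE, hav⟩
  · rintro rfl
    obtain ⟨e, eE, hea⟩ := (h.isFrobenius.unit_left a a).mpr rfl
    exact ⟨(e, a), hea, hea⟩
end

section
/- Normalisable dagger Frobenius algebras in Rel are in one-to-one correspondence with groupoids: the set of morphisms of a groupoid G with the composition relation μ = {((g,f), g∘f) : f,g composable} and unit relation η = {(*, id_a) : a ∈ Ob(G)} forms a normalisable dagger Frobenius algebra, and every such algebra arises this way. -/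
open CategoryTheory

/-- The set of morphisms of a groupoid. -/
abbrev Mor (G : Type) [Groupoid G] : Type := Σ (a b : G), a ⟶ b

/-- The composition relation of a groupoid, as a relation in `Rel`. -/
def gMul (G : Type) [Groupoid G] : Mor G × Mor G → Mor G → Prop := fun p k =>
  ∃ (a b c : G) (f : a ⟶ b) (g : b ⟶ c),
    p.1 = ⟨a, b, f⟩ ∧ p.2 = ⟨b, c, g⟩ ∧ k = ⟨a, c, f ≫ g⟩

/-- The unit relation of a groupoid: it relates `()` to the identities. -/
def gUnit (G : Type) [Groupoid G] : Unit → Mor G → Prop := fun _ k =>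
  ∃ a : G, k = ⟨a, a, 𝟙 a⟩

/-- The identity morphism at `a`, as an element of `Mor G`. -/
def gId (G : Type) [Groupoid G] (a : G) : Mor G := ⟨a, a, 𝟙 a⟩

namespace RelGrpd

variable {A : Type}

structure Nice (M : A × A → A → Prop) (U : Unit → A → Prop) : Prop where
  frob : IsRelFrobenius M U
  norm : ∀ a, U () a ↔ ∃ b, M (a, b) b

variable {M : A × A → A → Prop} {U : Unit → A → Prop}

lemma L1 (hn : Nice M U) {e a b : A} (he : U () e) (h : M (e, a) b) : a = b :=
  (hn.frob.unit_left a b).mp ⟨e, he, h⟩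

lemma L2 (hn : Nice M U) {e a b : A} (he : U () e) (h : M (a, e) b) : a = b :=
  (hn.frob.unit_right a b).mp ⟨e, he, h⟩

lemma lUnitEx (hn : Nice M U) (a : A) : ∃ e, U () e ∧ M (e, a) a :=
  (hn.frob.unit_left a a).mpr rfl

lemma rUnitEx (hn : Nice M U) (a : A) : ∃ e, U () e ∧ M (a, e) a :=
  (hn.frob.unit_right a a).mpr rfl

/-- left unit transfers along products -/
lemma tL (hn : Nice M U) {a b c e : A} (h : M (a, b) c) (he : U () e) (hea : M (e, a) a) :
    M (e, c) c := by
  obtain ⟨y, h1, h2⟩ := (hn.frob.assoc e a b c).mp ⟨a, hea, h⟩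
  obtain rfl := L1 hn he h2
  exact h2

/-- right unit transfers along products -/
lemma tR (hn : Nice M U) {a b c d : A} (h : M (a, b) c) (hd : U () d) (hbd : M (b, d) b) :
    M (c, d) c := by
  obtain ⟨x, h1, h2⟩ := (hn.frob.assoc a b d c).mpr ⟨b, hbd, h⟩
  obtain rfl := (L2 hn hd h2).symm
  exact h2

/-- right unit of the first factor is a left unit of the second -/
lemma tM1 (hn : Nice M U) {a b c d : A} (h : M (a, b) c) (hd : U () d) (had : M (a, d) a) :
    M (d, b) b := by
  obtain ⟨y, h1, h2⟩ := (hn.frob.assoc a d b c).mp ⟨a, had, h⟩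
  obtain rfl := (L1 hn hd h1).symm
  exact h1

/-- left unit of the second factor is a right unit of the first -/
lemma tM2 (hn : Nice M U) {a b c d : A} (h : M (a, b) c) (hd : U () d) (hdb : M (d, b) b) :
    M (a, d) a := by
  obtain ⟨x, h1, h2⟩ := (hn.frob.assoc a d b c).mpr ⟨b, hdb, h⟩
  obtain rfl := (L2 hn hd h1).symm
  exact h1

/-- uniqueness of left units -/
lemma uL (hn : Nice M U) {e e' a : A} (he : U () e) (he' : U () e')
    (h : M (e, a) a) (h' : M (e', a) a) : e = e' := by
  obtain ⟨x, h1, h2⟩ := (hn.frob.frobenius e a e' a).mp ⟨a, h, h'⟩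
  obtain rfl := (L1 hn he h2).symm
  exact L2 hn he' h2

/-- uniqueness of right units -/
lemma uR (hn : Nice M U) {e e' a : A} (he : U () e) (he' : U () e')
    (h : M (a, e) a) (h' : M (a, e') a) : e = e' := by
  obtain ⟨x, h1, h2⟩ := (hn.frob.frobenius a e a e').mp ⟨a, h, h'⟩
  obtain rfl := (L2 hn he' h1).symm
  exact (L1 hn he h1).symm

lemma unitIdem (hn : Nice M U) {e : A} (he : U () e) : M (e, e) e := by
  obtain ⟨d, hd, hde⟩ := rUnitEx hn e
  obtain rfl := (L1 hn he hde).symm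
  exact hde

/-- single-valuedness towards a unit -/
lemma svu (hn : Nice M U) {p q u s : A} (hu : U () u) (h : M (p, q) u) (h' : M (p, q) s) :
    s = u := by
  -- u is a right unit of q
  obtain ⟨d, hd, hqd⟩ := rUnitEx hn q
  have hud : M (u, d) u := tR hn h hd hqd
  obtain rfl := (L1 hn hu hud).symm
  -- so s has right unit u as well
  have hsu : M (s, u) s := tR hn h' hd hqd
  -- frobenius on (s,u,s) and (p,q,s)
  obtain ⟨w, hw1, hw2⟩ := (hn.frob.frobenius s u p q).mp ⟨s, hsu, h'⟩
  -- hw1 : M (w, q) u, hw2 : M (s, w) p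
  obtain ⟨v, hv1, hv2⟩ := (hn.frob.frobenius p q w q).mp ⟨u, h, hw1⟩
  -- hv1 : M (v, q) q, hv2 : M (p, v) w
  have hvU : U () v := (hn.norm v).mpr ⟨q, hv1⟩
  obtain rfl := L2 hn hvU hv2
  -- hw2 : M (s, p) p, so s is a unit
  have hsU : U () s := (hn.norm s).mpr ⟨p, hw2⟩
  exact (L1 hn hsU hsu).symm

/-- single-valuedness of the multiplication -/
lemma sv (hn : Nice M U) {a b c c' : A} (h : M (a, b) c) (h' : M (a, b) c') : c' = c := by
  obtain ⟨ea, hea, heaa⟩ := lUnitEx hn a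
  have hec : M (ea, c) c := tL hn h hea heaa
  have hec' : M (ea, c') c' := tL hn h' hea heaa
  obtain ⟨x1, hx1, hax1⟩ := (hn.frob.frobenius a b ea c).mp ⟨c, h, hec⟩
  obtain ⟨x2, hx2, hax2⟩ := (hn.frob.frobenius a b ea c').mp ⟨c', h', hec'⟩
  -- hx1 : M (x1, c) b, hax1 : M (a, x1) ea ; similarly for x2, c'
  obtain ⟨v, hv1, hv2⟩ := (hn.frob.frobenius x1 c x2 c').mp ⟨b, hx1, hx2⟩
  -- hv1 : M (v, c') c, hv2 : M (x1, v) x2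
  obtain ⟨t, ht1, ht2⟩ := (hn.frob.assoc a x1 v (ea)).mpr ⟨x2, hv2, hax2⟩
  obtain rfl := svu hn hea hax1 ht1
  obtain rfl := (L1 hn hea ht2).symm
  exact L1 hn hea hv1

/-- composability when units match -/
lemma compEx (hn : Nice M U) {a b e : A} (he : U () e) (hae : M (a, e) a) (heb : M (e, b) b) :
    ∃ c, M (a, b) c := by
  obtain ⟨m, hm, -⟩ := (hn.frob.frobenius a b a b).mpr ⟨e, heb, hae⟩
  exact ⟨m, hm⟩

/-- existence of inverses -/
lemma invEx (hn : Nice M U) {a e e' : A} (he : U () e) (he' : U () e')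
    (hea : M (e, a) a) (hae' : M (a, e') a) :
    ∃ x, M (a, x) e ∧ M (x, a) e' := by
  obtain ⟨x, h1, h2⟩ := (hn.frob.frobenius a e' e a).mp ⟨a, hae', hea⟩
  exact ⟨x, h2, h1⟩

open CategoryTheory

/-- objects: the units -/
def Obj (_M : A × A → A → Prop) (U : Unit → A → Prop) : Type := {e : A // U () e}

/-- morphisms from `e` to `e'`: elements with left unit `e` and right unit `e'` -/
def HomS (M : A × A → A → Prop) {U : Unit → A → Prop} (e e' : Obj M U) : Type :=
  {a : A // M (e.1, a) a ∧ M (a, e'.1) a}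

variable (hn : Nice M U)

noncomputable def compS {e e' e'' : Obj M U} (f : HomS M e e') (g : HomS M e' e'') :
    HomS M e e'' :=
  ⟨Classical.choose (compEx hn e'.2 f.2.2 g.2.1),
    tL hn (Classical.choose_spec (compEx hn e'.2 f.2.2 g.2.1)) e.2 f.2.1,
    tR hn (Classical.choose_spec (compEx hn e'.2 f.2.2 g.2.1)) e''.2 g.2.2⟩

lemma compS_spec {e e' e'' : Obj M U} (f : HomS M e e') (g : HomS M e' e'') :
    M (f.1, g.1) (compS hn f g).1 :=
  Classical.choose_spec (compEx hn e'.2 f.2.2 g.2.1)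

noncomputable def idS (e : Obj M U) : HomS M e e :=
  ⟨e.1, unitIdem hn e.2, unitIdem hn e.2⟩

noncomputable def invS {e e' : Obj M U} (f : HomS M e e') : HomS M e' e :=
  ⟨Classical.choose (invEx hn e.2 e'.2 f.2.1 f.2.2),
    tM1 hn (Classical.choose_spec (invEx hn e.2 e'.2 f.2.1 f.2.2)).1 e'.2 f.2.2,
    tM2 hn (Classical.choose_spec (invEx hn e.2 e'.2 f.2.1 f.2.2)).2 e.2 f.2.1⟩

lemma invS_spec1 {e e' : Obj M U} (f : HomS M e e') : M (f.1, (invS hn f).1) e.1 :=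
  (Classical.choose_spec (invEx hn e.2 e'.2 f.2.1 f.2.2)).1

lemma invS_spec2 {e e' : Obj M U} (f : HomS M e e') : M ((invS hn f).1, f.1) e'.1 :=
  (Classical.choose_spec (invEx hn e.2 e'.2 f.2.1 f.2.2)).2

noncomputable def grpd : Groupoid (Obj M U) where
  Hom e e' := HomS M e e'
  id e := idS hn e
  comp f g := compS hn f g
  id_comp {e e'} f := Subtype.ext (L1 hn e.2 (compS_spec hn (idS hn e) f)).symm
  comp_id {e e'} f := Subtype.ext (L2 hn e'.2 (compS_spec hn f (idS hn e'))).symm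
  assoc {e₁ e₂ e₃ e₄} f g h := by
    show compS hn (compS hn f g) h = compS hn f (compS hn g h)
    apply Subtype.ext
    obtain ⟨y, hy1, hy2⟩ := (hn.frob.assoc f.1 g.1 h.1 ((compS hn (compS hn f g) h)).1).mp
      ⟨(compS hn f g).1, compS_spec hn f g, compS_spec hn (compS hn f g) h⟩
    obtain rfl := sv hn (compS_spec hn g h) hy1
    exact sv hn (compS_spec hn f (compS hn g h)) hy2
  inv f := invS hn f
  inv_comp {e e'} f := show compS hn (invS hn f) f = idS hn e' from
    Subtype.ext (sv hn (invS_spec2 hn f) (compS_spec hn (invS hn f) f))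
  comp_inv {e e'} f := show compS hn f (invS hn f) = idS hn e from
    Subtype.ext (sv hn (invS_spec1 hn f) (compS_spec hn f (invS hn f)))

noncomputable def lUnit (a : A) : Obj M U :=
  ⟨Classical.choose (lUnitEx hn a), (Classical.choose_spec (lUnitEx hn a)).1⟩

lemma lUnit_spec (a : A) : M ((lUnit hn a).1, a) a :=
  (Classical.choose_spec (lUnitEx hn a)).2

noncomputable def rUnit (a : A) : Obj M U :=
  ⟨Classical.choose (rUnitEx hn a), (Classical.choose_spec (rUnitEx hn a)).1⟩

lemma rUnit_spec (a : A) : M (a, (rUnit hn a).1) a :=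
  (Classical.choose_spec (rUnitEx hn a)).2

noncomputable def morVal (m : @Mor (Obj M U) (grpd hn)) : A :=
  (m.2.2 : HomS M m.1 m.2.1).1

lemma valInj (m m' : @Mor (Obj M U) (grpd hn)) (h : morVal hn m = morVal hn m') :
    m = m' := by
  obtain ⟨e1, e2, f⟩ := m
  obtain ⟨e1', e2', f'⟩ := m'
  have hf := (f : HomS M e1 e2).2
  have hf' := (f' : HomS M e1' e2').2
  have hval : (f : HomS M e1 e2).1 = (f' : HomS M e1' e2').1 := h
  obtain rfl : e1' = e1 := Subtype.ext (uL hn e1'.2 e1.2 (hval ▸ hf'.1) hf.1)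
  obtain rfl : e2' = e2 := Subtype.ext (uR hn e2'.2 e2.2 (hval ▸ hf'.2) hf.2)
  exact congrArg (fun t => (⟨_, _, t⟩ : @Mor (Obj M U) (grpd hn))) (Subtype.ext hval)

noncomputable def theEquiv : @Mor (Obj M U) (grpd hn) ≃ A :=
  { toFun := morVal hn
    invFun := fun a => ⟨lUnit hn a, rUnit hn a,
      (⟨a, lUnit_spec hn a, rUnit_spec hn a⟩ : HomS M (lUnit hn a) (rUnit hn a))⟩
    left_inv := fun m => valInj hn _ m rfl
    right_inv := fun a => rfl }

lemma corr_mul (m m' k : @Mor (Obj M U) (grpd hn)) :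
    M ((theEquiv hn) m, (theEquiv hn) m') ((theEquiv hn) k) ↔
      @gMul (Obj M U) (grpd hn) (m, m') k := by
  letI : Groupoid (Obj M U) := grpd hn
  constructor
  · intro hM
    obtain ⟨e1, e2, f⟩ := m
    obtain ⟨e3, e4, g⟩ := m'
    have hM' : M ((f : HomS M e1 e2).1, (g : HomS M e3 e4).1) (morVal hn k) := hM
    obtain rfl : e3 = e2 := Subtype.ext
      (uL hn e3.2 e2.2 (g : HomS M e3 e4).2.1 (tM1 hn hM' e2.2 (f : HomS M e1 e2).2.2))
    refine ⟨_, _, _, f, g, rfl, rfl, ?_⟩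
    exact valInj hn k ⟨_, _, f ≫ g⟩ (sv hn (compS_spec hn f g) hM')
  · rintro ⟨a, b, c, f, g, rfl, rfl, rfl⟩
    exact compS_spec hn (f : HomS M a b) (g : HomS M b c)

lemma corr_unit (x : A) :
    U () x ↔ ∃ a : Obj M U, x = (theEquiv hn) (@gId (Obj M U) (grpd hn) a) := by
  constructor
  · intro hx
    exact ⟨⟨x, hx⟩, rfl⟩
  · rintro ⟨a, rfl⟩
    exact a.2

end RelGrpd

section Forward

variable {G : Type} [Groupoid G]

lemma mor_mk_inj {a b a' b' : G} {f : a ⟶ b} {f' : a' ⟶ b'}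
    (h : (⟨a, b, f⟩ : Mor G) = ⟨a', b', f'⟩) : ∃ (_ : a = a') (_ : b = b'), HEq f f' := by
  injection h with h1 h2
  subst h1
  injection eq_of_heq h2 with h3 h4
  subst h3
  exact ⟨rfl, rfl, h4⟩

theorem forward_frobenius : IsRelFrobenius (gMul G) (gUnit G) where
  assoc := by
    intro a b c d
    constructor
    · rintro ⟨x, ⟨p, q, r, f, g, rfl, rfl, rfl⟩, ⟨p', q', r', f', g', hx, rfl, rfl⟩⟩
      obtain ⟨h1, h2, h3⟩ := mor_mk_inj hx
      subst h1; subst h2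
      obtain rfl : f' = f ≫ g := (eq_of_heq h3).symm
      exact ⟨⟨q, r', g ≫ g'⟩, ⟨q, r, r', g, g', rfl, rfl, rfl⟩,
        ⟨p, q, r', f, g ≫ g', rfl, rfl, by simp⟩⟩
    · rintro ⟨y, ⟨p, q, r, f, g, rfl, rfl, rfl⟩, ⟨p', q', r', f', g', rfl, hy, rfl⟩⟩
      obtain ⟨h1, h2, h3⟩ := mor_mk_inj hy
      subst h1; subst h2
      obtain rfl : g' = f ≫ g := (eq_of_heq h3).symm
      exact ⟨⟨p', q, f' ≫ f⟩, ⟨p', p, q, f', f, rfl, rfl, rfl⟩,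
        ⟨p', q, r, f' ≫ f, g, rfl, rfl, by simp⟩⟩
  unit_left := by
    intro a b
    constructor
    · rintro ⟨ee, ⟨o, rfl⟩, ⟨p, q, r, f, g, h1, rfl, rfl⟩⟩
      obtain ⟨h2, h3, h4⟩ := mor_mk_inj h1
      subst h2; subst h3
      obtain rfl : f = 𝟙 o := (eq_of_heq h4).symm
      simp
    · rintro rfl
      obtain ⟨p, q, f⟩ := a
      exact ⟨⟨p, p, 𝟙 p⟩, ⟨p, rfl⟩, p, p, q, 𝟙 p, f, rfl, rfl, by simp⟩
  unit_right := by
    intro a b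
    constructor
    · rintro ⟨ee, ⟨o, rfl⟩, ⟨p, q, r, f, g, rfl, h1, rfl⟩⟩
      obtain ⟨h2, h3, h4⟩ := mor_mk_inj h1
      subst h2; subst h3
      obtain rfl := (eq_of_heq h4).symm
      simp
    · rintro rfl
      obtain ⟨p, q, f⟩ := a
      exact ⟨⟨q, q, 𝟙 q⟩, ⟨q, rfl⟩, p, q, q, f, 𝟙 q, rfl, rfl, by simp⟩
  frobenius := by
    intro a b c d
    constructor
    · rintro ⟨m, ⟨p, q, r, f, g, rfl, rfl, rfl⟩, ⟨p', q', r', f', g', rfl, rfl, hm⟩⟩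
      obtain ⟨h1, h2, h3⟩ := mor_mk_inj hm
      subst h1; subst h2
      have hfg : f ≫ g = f' ≫ g' := eq_of_heq h3
      have e1 : (Groupoid.inv f ≫ f') ≫ g' = g := by
        rw [Category.assoc, ← hfg, ← Category.assoc, Groupoid.inv_comp, Category.id_comp]
      have e2 : f ≫ (Groupoid.inv f ≫ f') = f' := by
        rw [← Category.assoc, Groupoid.comp_inv, Category.id_comp]
      exact ⟨⟨q, q', Groupoid.inv f ≫ f'⟩,
        ⟨q, q', r, Groupoid.inv f ≫ f', g', rfl, rfl, by rw [e1]⟩,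
        ⟨p, q, q', f, Groupoid.inv f ≫ f', rfl, rfl, by rw [e2]⟩⟩
    · rintro ⟨x, ⟨s, t, r, hh, g', rfl, rfl, rfl⟩, ⟨p, s', t', f, hh', rfl, hx, rfl⟩⟩
      obtain ⟨h1, h2, h3⟩ := mor_mk_inj hx
      subst h1; subst h2
      obtain rfl := eq_of_heq h3
      exact ⟨⟨p, r, f ≫ (hh ≫ g')⟩, ⟨p, s, r, f, hh ≫ g', rfl, rfl, rfl⟩,
        ⟨p, t, r, f ≫ hh, g', rfl, rfl, by simp⟩⟩

theorem forward_normalisable :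
    IsRelNormalisable (gMul G) (gUnit G) (fun a b : Mor G => a = b) where
  isFrobenius := forward_frobenius
  central := by
    constructor <;> intro a b c <;> constructor
    · rintro ⟨a', rfl, h⟩; exact ⟨c, h, rfl⟩
    · rintro ⟨m, h, rfl⟩; exact ⟨a, rfl, h⟩
    · rintro ⟨b', rfl, h⟩; exact ⟨c, h, rfl⟩
    · rintro ⟨m, h, rfl⟩; exact ⟨b, rfl, h⟩
  positive := by
    refine ⟨Mor G, Eq, fun a a' => ⟨fun h => ⟨a', h, rfl⟩, ?_⟩⟩
    rintro ⟨b, rfl, rfl⟩; rfl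
  iso := by
    refine ⟨Eq, fun a a' => ⟨?_, fun h => ⟨a, rfl, h⟩⟩, fun a a' => ⟨?_, fun h => ⟨a, rfl, h⟩⟩⟩
    · rintro ⟨x, rfl, rfl⟩; rfl
    · rintro ⟨x, rfl, rfl⟩; rfl
  normalised := by
    intro a
    constructor
    · rintro ⟨a'', ⟨a', rfl, rfl⟩, b, p, q, r, f, g, ha, rfl, hb⟩
      obtain ⟨h1, h2, h3⟩ := mor_mk_inj hb
      subst h1
      have hg : g = f ≫ g := eq_of_heq h3
      have hf : f = 𝟙 q := by
        have h5 : f ≫ (g ≫ Groupoid.inv g) = 𝟙 q := by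
          rw [← Category.assoc, ← hg, Groupoid.comp_inv]
        rw [Groupoid.comp_inv, Category.comp_id] at h5
        exact h5
      subst ha
      exact ⟨q, by rw [hf]⟩
    · rintro ⟨o, rfl⟩
      exact ⟨_, ⟨_, rfl, rfl⟩, ⟨o, o, 𝟙 o⟩, o, o, o, 𝟙 o, 𝟙 o, rfl, rfl, by simp⟩

end Forward

/-- normalisable dagger Frobenius algebras in `Rel` are in one-to-one
correspondence with groupoids: the morphism set of any groupoid with the composition and
unit relations (and identity normaliser) is a normalisable dagger Frobenius algebra, and
conversely every normalisable dagger Frobenius algebra in `Rel` arises this way up to a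
bijection transporting the structure. -/
theorem rel_normalisable_iff_groupoid :
    (∀ (G : Type) [Groupoid G],
        IsRelNormalisable (gMul G) (gUnit G) (fun a b : Mor G => a = b)) ∧
    (∀ (A : Type) (mul : A × A → A → Prop) (unit : Unit → A → Prop) (z : A → A → Prop),
        IsRelNormalisable mul unit z →
        ∃ (G : Type) (inst : Groupoid G) (e : @Mor G inst ≃ A),
          (∀ m m' k, mul (e m, e m') (e k) ↔ @gMul G inst (m, m') k) ∧
          (∀ x : A, unit () x ↔ ∃ a : G, x = e (@gId G inst a))) := by
  constructor
  · intro G _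
    exact forward_normalisable
  · intro A M U z hz
    obtain ⟨B, hfun, hpos⟩ := hz.positive
    obtain ⟨w, hw1, hw2⟩ := hz.iso
    have hzeq : ∀ a a', z a a' ↔ a = a' := by
      intro a a'
      constructor
      · intro hzaa'
        obtain ⟨x0, hzx, hwx⟩ := (hw1 a a).mpr rfl
        have hzaa : z a a := by
          obtain ⟨b, h1, h2⟩ := (hpos a x0).mp hzx
          exact (hpos a a).mpr ⟨b, h1, h1⟩
        have e1 : x0 = a' := (hw2 x0 a').mp ⟨a, hwx, hzaa'⟩
        have e2 : x0 = a := (hw2 x0 a).mp ⟨a, hwx, hzaa⟩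
        rw [← e1, e2]
      · rintro rfl
        obtain ⟨x0, hzx, hwx⟩ := (hw1 a a).mpr rfl
        obtain ⟨b, h1, h2⟩ := (hpos a x0).mp hzx
        exact (hpos a a).mpr ⟨b, h1, h1⟩
    have hn : RelGrpd.Nice M U := by
      refine ⟨hz.isFrobenius, fun a => ?_⟩
      constructor
      · intro hU
        obtain ⟨a'', ⟨a', hz1, hz2⟩, hb⟩ := (hz.normalised a).mpr hU
        obtain rfl := (hzeq _ _).mp hz1
        obtain rfl := (hzeq _ _).mp hz2
        exact hb
      · rintro ⟨b, hb⟩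
        exact (hz.normalised a).mp
          ⟨a, ⟨a, (hzeq a a).mpr rfl, (hzeq a a).mpr rfl⟩, b, hb⟩
    exact ⟨RelGrpd.Obj M U, RelGrpd.grpd hn, RelGrpd.theEquiv hn,
      RelGrpd.corr_mul hn, RelGrpd.corr_unit hn⟩
end

section
/- A relation R ⊆ Mor(G) × Mor(H) between the morphism-sets of groupoids G and H satisfies the abstract complete-positivity condition (in Rel) if and only if R respects inverses: (g,h) ∈ R implies (g⁻¹,h⁻¹) ∈ R and (id_{dom g}, id_{dom h}) ∈ R. -/
open CategoryTheory

/-- The inverse of a morphism of a groupoid. -/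
def gInv (G : Type) [Groupoid G] : Mor G → Mor G := fun m =>
  ⟨m.2.1, m.1, Groupoid.inv m.2.2⟩

/-- A relation between the morphism sets of two groupoids respects inverses when
`(g,h) ∈ R` implies `(g⁻¹,h⁻¹) ∈ R` and `(id_{dom g}, id_{dom h}) ∈ R`. -/
def RespectsInverses {G H : Type} [Groupoid G] [Groupoid H]
    (R : Mor G → Mor H → Prop) : Prop :=
  ∀ g h, R g h → R (gInv G g) (gInv H h) ∧ R (gId G g.1) (gId H h.1)

/-- The conjugated form `R̃ = (action_H) ∘ R ∘ (coaction_G)` of a relation `R` between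
the groupoid algebras: `R̃((g,g'),(h,h'))` holds iff `g⁻¹` and `g'` are composable,
`h⁻¹` and `h'` are composable, and `(g⁻¹∘g', h⁻¹∘h') ∈ R`. -/
def tilde {G H : Type} [Groupoid G] [Groupoid H] (R : Mor G → Mor H → Prop)
    (g g' : Mor G) (h h' : Mor H) : Prop :=
  ∃ k l, gMul G (gInv G g, g') k ∧ gMul H (gInv H h, h') l ∧ R k l


lemma mor_ext {G : Type} [Groupoid G] {a b a' b' : G} {f : a ⟶ b} {f' : a' ⟶ b'}
    (h : (⟨a, b, f⟩ : Mor G) = ⟨a', b', f'⟩) :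
    ∃ (_ : a = a') (_ : b = b'), HEq f f' := by
  injection h with h1 h2
  subst h1
  injection h2 with h3 h4
  subst h3
  exact ⟨rfl, rfl, h4⟩

lemma gMul_mk {G : Type} [Groupoid G] {a b c : G} (f : a ⟶ b) (g : b ⟶ c) :
    gMul G (⟨a, b, f⟩, ⟨b, c, g⟩) ⟨a, c, f ≫ g⟩ :=
  ⟨a, b, c, f, g, rfl, rfl, rfl⟩

lemma gMul_eq {G : Type} [Groupoid G] {a b c : G} {f : a ⟶ b} {g : b ⟶ c} {k : Mor G}
    (h : gMul G (⟨a, b, f⟩, ⟨b, c, g⟩) k) : k = ⟨a, c, f ≫ g⟩ := by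
  obtain ⟨a1, b1, c1, f1, g1, e1, e2, rfl⟩ := h
  obtain ⟨rfl, rfl, hf⟩ := mor_ext e1
  obtain ⟨-, rfl, hg⟩ := mor_ext e2
  cases hf; cases hg; rfl

/-- a relation `R` between the morphism sets of groupoids `G` and `H`
satisfies the abstract complete-positivity (CP*) condition in `Rel` — i.e. its
conjugated form `R̃` is closed under swapping and the diagonal — if and only if `R`
respects inverses. -/
theorem cpstar_iff_respects_inverses {G H : Type} [Groupoid G] [Groupoid H]
    (R : Mor G → Mor H → Prop) :
    (∀ g g' h h', tilde R g g' h h' → tilde R g' g h' h ∧ tilde R g g h h) ↔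
      RespectsInverses R := by
  constructor
  · intro hCP g h hR
    obtain ⟨a, b, f⟩ := g
    obtain ⟨x, y, p⟩ := h
    have h1 : tilde R (gId G a) ⟨a, b, f⟩ (gId H x) ⟨x, y, p⟩ := by
      refine ⟨⟨a, b, f⟩, ⟨x, y, p⟩, ?_, ?_, hR⟩
      · have := gMul_mk (G := G) (Groupoid.inv (𝟙 a)) f
        simpa [gInv, gId, Groupoid.inv_eq_inv] using this
      · have := gMul_mk (G := H) (Groupoid.inv (𝟙 x)) p
        simpa [gInv, gId, Groupoid.inv_eq_inv] using this
    obtain ⟨hswap, hdiag⟩ := hCP _ _ _ _ h1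
    constructor
    · obtain ⟨k, l, hk, hl, hR'⟩ := hswap
      have ek : k = ⟨b, a, Groupoid.inv f ≫ 𝟙 a⟩ :=
        gMul_eq (f := Groupoid.inv f) (g := 𝟙 a) hk
      have el : l = ⟨y, x, Groupoid.inv p ≫ 𝟙 x⟩ :=
        gMul_eq (f := Groupoid.inv p) (g := 𝟙 x) hl
      subst ek; subst el
      simpa [gInv] using hR'
    · obtain ⟨k, l, hk, hl, hR'⟩ := hdiag
      have ek : k = ⟨a, a, Groupoid.inv (𝟙 a) ≫ 𝟙 a⟩ :=
        gMul_eq (f := Groupoid.inv (𝟙 a)) (g := 𝟙 a) hk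
      have el : l = ⟨x, x, Groupoid.inv (𝟙 x) ≫ 𝟙 x⟩ :=
        gMul_eq (f := Groupoid.inv (𝟙 x)) (g := 𝟙 x) hl
      subst ek; subst el
      simpa [gId, Groupoid.inv_eq_inv] using hR'
  · rintro hRI g g' h h' ⟨k, l, hk, hl, hR⟩
    obtain ⟨a, b, f⟩ := g
    obtain ⟨x, y, p⟩ := h
    obtain ⟨a1, b1, c1, f1, g1, e1, e2, rfl⟩ := hk
    obtain ⟨rfl, rfl, hf⟩ := mor_ext e1
    cases hf
    subst e2
    obtain ⟨x1, y1, z1, p1, q1, e3, e4, rfl⟩ := hl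
    obtain ⟨rfl, rfl, hp⟩ := mor_ext e3
    cases hp
    subst e4
    obtain ⟨hInv, hId⟩ := hRI _ _ hR
    constructor
    · refine ⟨⟨c1, b, Groupoid.inv g1 ≫ f⟩, ⟨z1, y, Groupoid.inv q1 ≫ p⟩,
        gMul_mk _ _, gMul_mk _ _, ?_⟩
      have e5 : (⟨c1, b, Groupoid.inv g1 ≫ f⟩ : Mor G)
          = gInv G ⟨b, c1, Groupoid.inv f ≫ g1⟩ := by
        simp [gInv, Groupoid.inv_eq_inv]
      have e6 : (⟨z1, y, Groupoid.inv q1 ≫ p⟩ : Mor H)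
          = gInv H ⟨y, z1, Groupoid.inv p ≫ q1⟩ := by
        simp [gInv, Groupoid.inv_eq_inv]
      rw [e5, e6]; exact hInv
    · refine ⟨⟨b, b, Groupoid.inv f ≫ f⟩, ⟨y, y, Groupoid.inv p ≫ p⟩,
        gMul_mk _ _, gMul_mk _ _, ?_⟩
      have e5 : (⟨b, b, Groupoid.inv f ≫ f⟩ : Mor G) = gId G b := by
        simp [gId, Groupoid.inv_eq_inv]
      have e6 : (⟨y, y, Groupoid.inv p ≫ p⟩ : Mor H) = gId H y := by
        simp [gId, Groupoid.inv_eq_inv]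
      rw [e5, e6]; exact hId
end
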